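/- Let n ≥ 2, α > 1 and p ≥ 2*_α := 2(α(n-1)+1)/(α(n-1)-1), with p ≤ 2n/(n-2) if n ≥ 3. Let ψ be a continuous positive function on (0,∞) with κ₁ r ≤ ψ(r) ≤ κ₂ r near 0 (for some κ₁,κ₂>0) and κ₁ r^α ≤ ψ(r) ≤ κ₂ r^α for r large. Then sup_{r>0} (∫₀^r ψ^{n-1} ds)^{1/p} (∫_r^∞ ψ^{-(n-1)} ds)^{1/2} < ∞. -/

import Mathlib

open Set MeasureTheory intervalIntegral

private lemma rpow_half_add_le (x y : ℝ) (hx : 0 ≤ x) (hy : 0 ≤ y) :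
    (x + y) ^ (1/2:ℝ) ≤ x ^ (1/2:ℝ) + y ^ (1/2:ℝ) := by
  rw [← Real.sqrt_eq_rpow, ← Real.sqrt_eq_rpow, ← Real.sqrt_eq_rpow]
  have h : x + y ≤ (Real.sqrt x + Real.sqrt y)^2 := by
    nlinarith [Real.sq_sqrt hx, Real.sq_sqrt hy, Real.sqrt_nonneg x, Real.sqrt_nonneg y]
  calc Real.sqrt (x+y) ≤ Real.sqrt ((Real.sqrt x + Real.sqrt y)^2) := Real.sqrt_le_sqrt h
  _ = _ := Real.sqrt_sq (by positivity)

set_option maxHeartbeats 2000000 in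
/-- Corollary 3.2 (continuity of the embedding): for a weight `ψ` comparable to `r`
near `0` and to `r^α` at infinity, and `2*_α ≤ p` (with `p ≤ 2*` if `n ≥ 3`), the
one-dimensional Muckenhoupt quantity is uniformly bounded in `r > 0`. -/
theorem muckenhoupt_bounded (n : ℕ) (hn : 2 ≤ n) (α : ℝ) (hα : 1 < α)
    (p : ℝ) (hp : 2 * (α * (n - 1) + 1) / (α * (n - 1) - 1) ≤ p)
    (hp' : 3 ≤ n → p ≤ 2 * n / ((n : ℝ) - 2))
    (ψ : ℝ → ℝ)
    (hcont : ContinuousOn ψ (Ioi 0))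
    (hpos : ∀ r > (0:ℝ), 0 < ψ r)
    (κ₁ κ₂ : ℝ) (hκ₁ : 0 < κ₁) (hκ₂ : 0 < κ₂)
    (δ : ℝ) (hδ : 0 < δ)
    (h0 : ∀ r ∈ Ioo (0:ℝ) δ, κ₁ * r ≤ ψ r ∧ ψ r ≤ κ₂ * r)
    (R : ℝ) (hR : 0 < R)
    (hinf : ∀ r ≥ R, κ₁ * r ^ α ≤ ψ r ∧ ψ r ≤ κ₂ * r ^ α) :
    ∃ C : ℝ, ∀ r > (0:ℝ),
      (∫ s in (0:ℝ)..r, ψ s ^ (n - 1)) ^ (1 / p)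
          * (∫ s in Ioi r, (ψ s ^ (n - 1))⁻¹) ^ (1 / 2 : ℝ) ≤ C := by
  classical
  have hn1 : (1:ℝ) ≤ (n:ℝ) - 1 := by
    have h2 : (2:ℝ) ≤ (n:ℝ) := by exact_mod_cast hn
    linarith
  have hmc : ((n - 1 : ℕ) : ℝ) = (n:ℝ) - 1 := by
    rw [Nat.cast_sub (by omega : 1 ≤ n), Nat.cast_one]
  set a : ℝ := α * ((n:ℝ) - 1) with ha_def
  have ha1 : 1 < a := by nlinarith
  have hp0 : 0 < p :=
    lt_of_lt_of_le (div_pos (by linarith) (by linarith)) hp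
  have hElarge : (a+1)/p + (1-a)/2 ≤ 0 := by
    rw [div_le_iff₀ (by linarith : (0:ℝ) < a - 1)] at hp
    have h1 : (a+1)/p ≤ (a-1)/2 := by
      rw [div_le_div_iff₀ hp0 two_pos]; nlinarith
    linarith
  set F : ℝ → ℝ := fun s => ψ s ^ (n - 1) with hFdef
  set G : ℝ → ℝ := fun s => (ψ s ^ (n - 1))⁻¹ with hGdef
  set I : ℝ → ℝ := fun r => ∫ s in (0:ℝ)..r, F s with hIdef
  set J : ℝ → ℝ := fun r => ∫ s in Ioi r, G s with hJdef
  -- pointwise positivity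
  have hF0 : ∀ s ∈ Ioi (0:ℝ), 0 < F s := fun s hs => pow_pos (hpos s hs) _
  have hG0 : ∀ s ∈ Ioi (0:ℝ), 0 < G s := fun s hs => inv_pos.2 (pow_pos (hpos s hs) _)
  -- measurability
  have hFc : ContinuousOn F (Ioi 0) := hcont.pow _
  have hGc : ContinuousOn G (Ioi 0) :=
    (hcont.pow _).inv₀ (fun s hs => (pow_pos (hpos s hs) _).ne')
  have hFm : ∀ {s : Set ℝ}, MeasurableSet s → s ⊆ Ioi 0 →
      AEStronglyMeasurable F (volume.restrict s) := by
    intro s hs hsub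
    exact (hFc.mono hsub).aestronglyMeasurable hs
  have hGm : ∀ {s : Set ℝ}, MeasurableSet s → s ⊆ Ioi 0 →
      AEStronglyMeasurable G (volume.restrict s) := by
    intro s hs hsub
    exact (hGc.mono hsub).aestronglyMeasurable hs
  set δ₀ : ℝ := δ / 2 with hδ₀def
  have hδ₀ : 0 < δ₀ := by positivity
  have hδ₀δ : δ₀ < δ := by rw [hδ₀def]; linarith
  set R₁ : ℝ := max R 1 with hR₁def
  have hR₁ : 0 < R₁ := lt_of_lt_of_le one_pos (le_max_right _ _)
  have hR₁1 : 1 ≤ R₁ := le_max_right _ _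
  have hR₁R : R ≤ R₁ := le_max_left _ _
  have hpow_eq : ∀ x : ℝ, 0 < x → ∀ c : ℝ, (c * x ^ α) ^ (n - 1) = c ^ (n - 1) * x ^ a := by
    intro x hx c
    rw [ha_def, mul_pow, ← Real.rpow_natCast (x ^ α) (n - 1), hmc, ← Real.rpow_mul hx.le]
  -- integrability of F on (0, r]
  have hIF : ∀ r, 0 < r → IntegrableOn F (Ioc 0 r) := by
    intro r hr
    have hc0 : 0 < min δ₀ r := lt_min hδ₀ hr
    have h1 : IntegrableOn F (Ioc 0 (min δ₀ r)) := by
      have hsub : Ioc 0 (min δ₀ r) ⊆ Ioi (0:ℝ) := Ioc_subset_Ioi_self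
      refine Integrable.mono' (g := fun _ => (κ₂ * δ) ^ (n - 1))
        (integrableOn_const measure_Ioc_lt_top.ne)
        (hFm measurableSet_Ioc hsub) ?_
      refine (ae_restrict_iff' measurableSet_Ioc).2 (ae_of_all _ ?_)
      intro s hs
      have hs0 : 0 < s := hs.1
      have hsδ : s < δ := lt_of_le_of_lt (hs.2.trans (min_le_left _ _)) hδ₀δ
      have h2 := (h0 s ⟨hs0, hsδ⟩).2
      have hψ : 0 < ψ s := hpos s hs0
      have hb : ψ s ^ (n - 1) ≤ (κ₂ * δ) ^ (n - 1) := by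
        apply pow_le_pow_left₀ hψ.le
        calc ψ s ≤ κ₂ * s := h2
        _ ≤ κ₂ * δ := by nlinarith
      show ‖F s‖ ≤ (κ₂ * δ) ^ (n - 1)
      rw [hFdef, Real.norm_eq_abs, abs_of_nonneg (pow_nonneg hψ.le _)]
      exact hb
    have h2 : IntegrableOn F (Ioc (min δ₀ r) r) := by
      have hsub : Icc (min δ₀ r) r ⊆ Ioi (0:ℝ) := fun x hx => lt_of_lt_of_le hc0 hx.1
      exact ((hFc.mono hsub).integrableOn_Icc).mono_set Ioc_subset_Icc_self
    have h3 := h1.union h2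
    rwa [Ioc_union_Ioc_eq_Ioc hc0.le (min_le_right _ _)] at h3
  have hIF' : ∀ r, 0 < r → IntervalIntegrable F volume 0 r := by
    intro r hr
    exact (intervalIntegrable_iff_integrableOn_Ioc_of_le hr.le).2 (hIF r hr)
  -- integrability of G on (r, ∞)
  have hIG : ∀ r, 0 < r → IntegrableOn G (Ioi r) := by
    intro r hr
    have hc0 : 0 < max r R := lt_of_lt_of_le hr (le_max_left _ _)
    have htail : IntegrableOn G (Ioi (max r R)) := by
      have hint : IntegrableOn (fun s : ℝ => (κ₁ ^ (n - 1))⁻¹ * s ^ (-a)) (Ioi (max r R)) :=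
        (integrableOn_Ioi_rpow_of_lt (by linarith) hc0).const_mul _
      refine Integrable.mono' hint
        (hGm measurableSet_Ioi fun x hx => lt_trans hc0 hx) ?_
      refine (ae_restrict_iff' measurableSet_Ioi).2 (ae_of_all _ ?_)
      intro s hs
      have hsc : max r R < s := hs
      have hs0 : 0 < s := lt_trans hc0 hsc
      have hsR : R ≤ s := le_of_lt (lt_of_le_of_lt (le_max_right r R) hsc)
      have hψ : 0 < ψ s := hpos s hs0
      have hkey : κ₁ ^ (n - 1) * s ^ a ≤ ψ s ^ (n - 1) := by
        rw [← hpow_eq s hs0 κ₁]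
        exact pow_le_pow_left₀ (by positivity) (hinf s hsR).1 _
      have hGle : G s ≤ (κ₁ ^ (n - 1))⁻¹ * s ^ (-a) := by
        rw [hGdef, Real.rpow_neg hs0.le, ← mul_inv]
        exact inv_anti₀ (by positivity) hkey
      have hG0' : 0 ≤ G s := (hG0 s hs0).le
      show ‖G s‖ ≤ (κ₁ ^ (n - 1))⁻¹ * s ^ (-a)
      rwa [Real.norm_eq_abs, abs_of_nonneg hG0']
    have hmidl : IntegrableOn G (Ioc r (max r R)) := by
      have hsub : Icc r (max r R) ⊆ Ioi (0:ℝ) := fun x hx => lt_of_lt_of_le hr hx.1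
      exact ((hGc.mono hsub).integrableOn_Icc).mono_set Ioc_subset_Icc_self
    have h3 := hmidl.union htail
    rwa [Ioc_union_Ioi_eq_Ioi (le_max_left _ _)] at h3
  -- nonnegativity of I and J
  have hI0 : ∀ r, 0 < r → 0 ≤ I r := by
    intro r hr
    show 0 ≤ ∫ s in (0:ℝ)..r, F s
    rw [intervalIntegral.integral_of_le hr.le]
    exact setIntegral_nonneg measurableSet_Ioc (fun s hs => (hF0 s hs.1).le)
  have hJ0 : ∀ r, 0 < r → 0 ≤ J r := by
    intro r hr
    show 0 ≤ ∫ s in Ioi r, G s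
    exact setIntegral_nonneg measurableSet_Ioi
      (fun s hs => (hG0 s (lt_trans hr hs)).le)
  -- splitting J
  have hJsplit : ∀ r c, 0 < r → r ≤ c → J r = (∫ s in Ioc r c, G s) + J c := by
    intro r c hr hrc
    show (∫ s in Ioi r, G s) = (∫ s in Ioc r c, G s) + ∫ s in Ioi c, G s
    rw [← Ioc_union_Ioi_eq_Ioi hrc,
      setIntegral_union (Ioc_disjoint_Ioi le_rfl) measurableSet_Ioi
        ((hIG r hr).mono_set Ioc_subset_Ioi_self)
        ((hIG r hr).mono_set (Ioi_subset_Ioi hrc))]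
  -- the three constants
  -- middle regime
  have hmid : ∀ r, δ₀ ≤ r → r ≤ R₁ →
      I r ^ (1/p) * J r ^ (1/2:ℝ) ≤ I R₁ ^ (1/p) * J δ₀ ^ (1/2:ℝ) := by
    intro r h1 h2
    have hr0 : 0 < r := lt_of_lt_of_le hδ₀ h1
    have hIr : I r ≤ I R₁ := by
      show (∫ s in (0:ℝ)..r, F s) ≤ ∫ s in (0:ℝ)..R₁, F s
      refine intervalIntegral.integral_mono_interval le_rfl hr0.le h2 ?_ (hIF' R₁ hR₁)
      exact (ae_restrict_iff' measurableSet_Ioc).2 (ae_of_all _ fun x hx => (hF0 x hx.1).le)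
    have hJr : J r ≤ J δ₀ := by
      show (∫ s in Ioi r, G s) ≤ ∫ s in Ioi δ₀, G s
      refine setIntegral_mono_set (hIG δ₀ hδ₀) ?_
        (HasSubset.Subset.eventuallyLE (Ioi_subset_Ioi h1))
      exact (ae_restrict_iff' measurableSet_Ioi).2
        (ae_of_all _ fun x hx => (hG0 x (lt_trans hδ₀ hx)).le)
    exact mul_le_mul (Real.rpow_le_rpow (hI0 r hr0) hIr (by positivity))
      (Real.rpow_le_rpow (hJ0 r hr0) hJr (by norm_num))
      (Real.rpow_nonneg (hJ0 r hr0) _) (Real.rpow_nonneg (hI0 R₁ hR₁) _)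
  -- large regime
  obtain ⟨Cl, hCl0, hlarge⟩ : ∃ Cl, 0 ≤ Cl ∧ ∀ r, R₁ ≤ r →
      I r ^ (1/p) * J r ^ (1/2:ℝ) ≤ Cl := by
    set K : ℝ := I R₁ + κ₂ ^ (n - 1) / (a + 1) with hKdef
    have hK0 : 0 ≤ K := add_nonneg (hI0 R₁ hR₁) (by positivity)
    set D : ℝ := (κ₁ ^ (n - 1))⁻¹ / (a - 1) with hDdef
    have hD0 : 0 ≤ D := by
      rw [hDdef]
      have : (0:ℝ) < a - 1 := by linarith
      positivity
    refine ⟨K ^ (1/p) * D ^ (1/2:ℝ), by positivity, ?_⟩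
    intro r hrR
    have hr0 : 0 < r := lt_of_lt_of_le hR₁ hrR
    have hr1 : 1 ≤ r := le_trans hR₁1 hrR
    have hIIm : IntervalIntegrable F volume R₁ r :=
      (intervalIntegrable_iff_integrableOn_Ioc_of_le hrR).2
        ((hIF r hr0).mono_set (Ioc_subset_Ioc_left hR₁.le))
    have hrpow1 : (1:ℝ) ≤ r ^ (a + 1) := Real.one_le_rpow hr1 (by linarith)
    have hIbound : I r ≤ K * r ^ (a + 1) := by
      have hsplit : I r = I R₁ + ∫ s in R₁..r, F s := by
        show (∫ s in (0:ℝ)..r, F s) = (∫ s in (0:ℝ)..R₁, F s) + ∫ s in R₁..r, F s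
        rw [integral_add_adjacent_intervals (hIF' R₁ hR₁) hIIm]
      have hmono : (∫ s in R₁..r, F s) ≤ ∫ s in R₁..r, κ₂ ^ (n - 1) * s ^ a := by
        refine intervalIntegral.integral_mono_on hrR hIIm ?_ ?_
        · apply ContinuousOn.intervalIntegrable
          apply continuousOn_const.mul
          exact fun x _ =>
            (Real.continuousAt_rpow_const x a (Or.inr (by linarith))).continuousWithinAt
        · intro x hx
          have hxR : R ≤ x := le_trans hR₁R hx.1
          have hx0 : 0 < x := lt_of_lt_of_le hR hxR
          show F x ≤ κ₂ ^ (n - 1) * x ^ a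
          rw [hFdef, ← hpow_eq x hx0 κ₂]
          exact pow_le_pow_left₀ (hpos x hx0).le (hinf x hxR).2 _
      have hval : (∫ s in R₁..r, κ₂ ^ (n - 1) * s ^ a)
          = κ₂ ^ (n - 1) * ((r ^ (a+1) - R₁ ^ (a+1)) / (a+1)) := by
        rw [intervalIntegral.integral_const_mul,
          integral_rpow (Or.inl (by linarith : (-1:ℝ) < a))]
      have hR₁pow : 0 < R₁ ^ (a+1) := Real.rpow_pos_of_pos hR₁ _
      have hκpow : 0 < κ₂ ^ (n - 1) := pow_pos hκ₂ _
      have hIR₁ : 0 ≤ I R₁ := hI0 R₁ hR₁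
      have hfrac : κ₂ ^ (n - 1) * ((r ^ (a+1) - R₁ ^ (a+1)) / (a+1))
          = κ₂ ^ (n - 1) / (a+1) * (r ^ (a+1) - R₁ ^ (a+1)) := by ring
      have ha1' : (0:ℝ) < a + 1 := by linarith
      have hB0 : 0 < κ₂ ^ (n - 1) / (a+1) := by positivity
      rw [hsplit, hKdef]
      nlinarith [mul_nonneg hIR₁ (sub_nonneg.2 hrpow1), mul_pos hB0 hR₁pow,
        hmono, hval]
    have hJbound : J r ≤ D * r ^ (1 - a) := by
      have h1 : J r ≤ ∫ s in Ioi r, (κ₁ ^ (n - 1))⁻¹ * s ^ (-a) := by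
        refine setIntegral_mono_on (hIG r hr0)
          ((integrableOn_Ioi_rpow_of_lt (by linarith) hr0).const_mul _)
          measurableSet_Ioi ?_
        intro s hs
        have hs0 : 0 < s := lt_trans hr0 hs
        have hsR : R ≤ s := le_trans (le_trans hR₁R hrR) hs.le
        have hkey : κ₁ ^ (n - 1) * s ^ a ≤ ψ s ^ (n - 1) := by
          rw [← hpow_eq s hs0 κ₁]
          exact pow_le_pow_left₀ (by positivity) (hinf s hsR).1 _
        show G s ≤ (κ₁ ^ (n - 1))⁻¹ * s ^ (-a)
        rw [hGdef, Real.rpow_neg hs0.le, ← mul_inv]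
        exact inv_anti₀ (by positivity) hkey
      have h2 : (∫ s in Ioi r, (κ₁ ^ (n - 1))⁻¹ * s ^ (-a))
          = D * r ^ (1 - a) := by
        rw [MeasureTheory.integral_const_mul, integral_Ioi_rpow_of_lt (by linarith) hr0]
        rw [show -a + 1 = 1 - a by ring, hDdef]
        have hX : -(r ^ (1-a)) / (1 - a) = r ^ (1-a) / (a - 1) := by
          rw [div_eq_div_iff (ne_of_lt (by linarith : (1:ℝ) - a < 0)) (ne_of_gt (by linarith : (0:ℝ) < a - 1))]
          ring
        rw [neg_div] at hX ⊢
        rw [hX]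
        ring
      exact h1.trans (le_of_eq h2)
    have heq : (K * r ^ (a+1)) ^ (1/p) * (D * r ^ (1-a)) ^ (1/2:ℝ)
        = K ^ (1/p) * D ^ (1/2:ℝ) * r ^ ((a+1)/p + (1-a)/2) := by
      rw [Real.mul_rpow hK0 (Real.rpow_nonneg hr0.le _),
        Real.mul_rpow hD0 (Real.rpow_nonneg hr0.le _),
        ← Real.rpow_mul hr0.le, ← Real.rpow_mul hr0.le,
        mul_one_div, mul_one_div, Real.rpow_add hr0]
      ring
    calc I r ^ (1/p) * J r ^ (1/2:ℝ)
        ≤ (K * r ^ (a+1)) ^ (1/p) * (D * r ^ (1-a)) ^ (1/2:ℝ) :=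
          mul_le_mul (Real.rpow_le_rpow (hI0 r hr0) hIbound (by positivity))
            (Real.rpow_le_rpow (hJ0 r hr0) hJbound (by norm_num))
            (Real.rpow_nonneg (hJ0 r hr0) _)
            (Real.rpow_nonneg (mul_nonneg hK0 (Real.rpow_nonneg hr0.le _)) _)
      _ = K ^ (1/p) * D ^ (1/2:ℝ) * r ^ ((a+1)/p + (1-a)/2) := heq
      _ ≤ K ^ (1/p) * D ^ (1/2:ℝ) * 1 := by
          refine mul_le_mul_of_nonneg_left ?_ (by positivity)
          exact Real.rpow_le_one_of_one_le_of_nonpos hr1 hElarge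
      _ = K ^ (1/p) * D ^ (1/2:ℝ) := mul_one _
  -- small regime
  obtain ⟨Cs, hCs0, hsmall⟩ : ∃ Cs, 0 ≤ Cs ∧ ∀ r, 0 < r → r ≤ δ₀ →
      I r ^ (1/p) * J r ^ (1/2:ℝ) ≤ Cs := by
    have hJδ : 0 ≤ J δ₀ := hJ0 δ₀ hδ₀
    have hκpow : (0:ℝ) < κ₁ ^ (n - 1) := pow_pos hκ₁ _
    have hGsmall : ∀ s, 0 < s → s < δ → G s ≤ (κ₁ ^ (n - 1))⁻¹ * s ^ (-((n:ℝ) - 1)) := by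
      intro s hs0 hsδ
      have hlow := (h0 s ⟨hs0, hsδ⟩).1
      have hkey : κ₁ ^ (n - 1) * s ^ ((n:ℝ) - 1) ≤ ψ s ^ (n - 1) := by
        have h1 : (κ₁ * s) ^ (n - 1) ≤ ψ s ^ (n - 1) :=
          pow_le_pow_left₀ (by positivity) hlow _
        rw [mul_pow] at h1
        rwa [← hmc, Real.rpow_natCast]
      rw [hGdef, Real.rpow_neg hs0.le, ← mul_inv]
      exact inv_anti₀ (by positivity) hkey
    have hintG : ∀ r, 0 < r → IntegrableOn G (Ioc r δ₀) :=
      fun r hr => (hIG r hr).mono_set Ioc_subset_Ioi_self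
    have hintrpow : ∀ r, 0 < r → ∀ q : ℝ,
        IntegrableOn (fun s : ℝ => s ^ q) (Ioc r δ₀) := by
      intro r hr q
      refine (ContinuousOn.integrableOn_Icc ?_).mono_set Ioc_subset_Icc_self
      intro x hx
      exact (Real.continuousAt_rpow_const x q
        (Or.inl (ne_of_gt (lt_of_lt_of_le hr hx.1)))).continuousWithinAt
    obtain ⟨e, A, hA0, he0, heB, hbound⟩ :
        ∃ e A : ℝ, 0 ≤ A ∧ 0 ≤ e ∧ e / 2 ≤ (n:ℝ) / p ∧ ∀ r, 0 < r → r ≤ δ₀ →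
          (∫ s in Ioc r δ₀, G s) ≤ A * r ^ (-e) := by
      rcases eq_or_lt_of_le hn with hn2 | hn3
      · -- n = 2
        have h2c : ((n:ℝ)) = 2 := by exact_mod_cast hn2.symm
        refine ⟨1/p, (κ₁ ^ (n - 1))⁻¹ * δ₀ ^ (1/p) * p, by positivity, by positivity, ?_, ?_⟩
        · rw [h2c, div_le_div_iff₀ (by positivity) hp0]
          have h1p : 1/p * p = 1 := div_mul_cancel₀ 1 (ne_of_gt hp0)
          linarith
        · intro r hr hrδ₀
          have hn1' : (n:ℝ) - 1 = 1 := by rw [h2c]; norm_num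
          have hmono : (∫ s in Ioc r δ₀, G s)
              ≤ ∫ s in Ioc r δ₀, ((κ₁ ^ (n - 1))⁻¹ * r ^ (-(1/p))) * s ^ (1/p - 1) := by
            refine setIntegral_mono_on (hintG r hr)
              ((hintrpow r hr _).const_mul _) measurableSet_Ioc ?_
            intro s hs
            have hs0 : 0 < s := lt_trans hr hs.1
            have hsδ : s < δ := lt_of_le_of_lt hs.2 hδ₀δ
            have h1 := hGsmall s hs0 hsδ
            rw [hn1'] at h1
            have h2 : s ^ (-(1:ℝ)) = s ^ (1/p - 1) * s ^ (-(1/p)) := by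
              rw [← Real.rpow_add hs0]; congr 1; ring
            have h3 : s ^ (-(1/p)) ≤ r ^ (-(1/p)) := by
              rw [Real.rpow_neg hs0.le, Real.rpow_neg hr.le]
              exact inv_anti₀ (Real.rpow_pos_of_pos hr _)
                (Real.rpow_le_rpow hr.le hs.1.le (by positivity))
            calc G s ≤ (κ₁ ^ (n-1))⁻¹ * s ^ (-(1:ℝ)) := h1
            _ = (κ₁ ^ (n-1))⁻¹ * (s ^ (1/p - 1) * s ^ (-(1/p))) := by rw [h2]
            _ ≤ (κ₁ ^ (n-1))⁻¹ * (s ^ (1/p - 1) * r ^ (-(1/p))) := by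
                refine mul_le_mul_of_nonneg_left ?_ (by positivity)
                exact mul_le_mul_of_nonneg_left h3 (Real.rpow_nonneg hs0.le _)
            _ = (κ₁ ^ (n-1))⁻¹ * r ^ (-(1/p)) * s ^ (1/p - 1) := by ring
          have hval : (∫ s in Ioc r δ₀, ((κ₁ ^ (n-1))⁻¹ * r ^ (-(1/p))) * s ^ (1/p - 1))
              = ((κ₁ ^ (n-1))⁻¹ * r ^ (-(1/p))) * ((δ₀ ^ (1/p) - r ^ (1/p)) / (1/p)) := by
            rw [MeasureTheory.integral_const_mul, ← intervalIntegral.integral_of_le hrδ₀,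
              integral_rpow (Or.inl (by
                have := one_div_pos.2 hp0
                linarith : (-1:ℝ) < 1/p - 1))]
            rw [show 1/p - 1 + 1 = 1/p by ring]
          have hrp : 0 < r ^ (-(1/p)) := Real.rpow_pos_of_pos hr _
          have hδp : 0 ≤ δ₀ ^ (1/p) := Real.rpow_nonneg hδ₀.le _
          have hrp2 : 0 ≤ r ^ (1/p) := Real.rpow_nonneg hr.le _
          have heq2 : (δ₀ ^ (1/p) - r ^ (1/p)) / (1/p) = p * (δ₀ ^ (1/p) - r ^ (1/p)) := by
            field_simp
          calc (∫ s in Ioc r δ₀, G s)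
              ≤ ((κ₁ ^ (n-1))⁻¹ * r ^ (-(1/p))) * ((δ₀ ^ (1/p) - r ^ (1/p)) / (1/p)) :=
                hmono.trans (le_of_eq hval)
            _ = (κ₁ ^ (n-1))⁻¹ * p * (δ₀ ^ (1/p) - r ^ (1/p)) * r ^ (-(1/p)) := by
                rw [heq2]; ring
            _ ≤ (κ₁ ^ (n-1))⁻¹ * δ₀ ^ (1/p) * p * r ^ (-(1/p)) := by
                refine mul_le_mul_of_nonneg_right ?_ hrp.le
                nlinarith [mul_nonneg (mul_nonneg (inv_pos.2 hκpow).le hp0.le) hrp2]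
      · -- n ≥ 3
        have hn3' : 3 ≤ n := by omega
        have hn2R : (0:ℝ) < (n:ℝ) - 2 := by
          have : (3:ℝ) ≤ (n:ℝ) := by exact_mod_cast hn3'
          linarith
        have hpn := hp' hn3'
        refine ⟨(n:ℝ) - 2, (κ₁ ^ (n-1))⁻¹ / ((n:ℝ) - 2), by positivity, hn2R.le, ?_, ?_⟩
        · rw [div_le_div_iff₀ two_pos hp0]
          rw [le_div_iff₀ hn2R] at hpn
          linarith
        · intro r hr hrδ₀
          have hmono : (∫ s in Ioc r δ₀, G s)
              ≤ ∫ s in Ioc r δ₀, (κ₁ ^ (n-1))⁻¹ * s ^ (-((n:ℝ) - 1)) := by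
            refine setIntegral_mono_on (hintG r hr)
              ((hintrpow r hr _).const_mul _) measurableSet_Ioc ?_
            intro s hs
            exact hGsmall s (lt_trans hr hs.1) (lt_of_le_of_lt hs.2 hδ₀δ)
          have hval : (∫ s in Ioc r δ₀, (κ₁ ^ (n-1))⁻¹ * s ^ (-((n:ℝ) - 1)))
              = (κ₁ ^ (n-1))⁻¹ * ((δ₀ ^ (-((n:ℝ) - 2)) - r ^ (-((n:ℝ) - 2))) / (-((n:ℝ) - 2))) := by
            rw [MeasureTheory.integral_const_mul, ← intervalIntegral.integral_of_le hrδ₀,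
              integral_rpow (Or.inr ⟨ne_of_lt (by linarith : -((n:ℝ) - 1) < -1),
                notMem_uIcc_of_lt hr hδ₀⟩)]
            rw [show -((n:ℝ) - 1) + 1 = -((n:ℝ) - 2) by ring]
          have hδX : 0 < δ₀ ^ (-((n:ℝ) - 2)) := Real.rpow_pos_of_pos hδ₀ _
          have hfr : (δ₀ ^ (-((n:ℝ) - 2)) - r ^ (-((n:ℝ) - 2))) / (-((n:ℝ) - 2))
              = (r ^ (-((n:ℝ) - 2)) - δ₀ ^ (-((n:ℝ) - 2))) / ((n:ℝ) - 2) := by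
            rw [div_eq_div_iff (ne_of_lt (by linarith : -((n:ℝ) - 2) < 0)) (ne_of_gt hn2R)]
            ring
          have h9 : (κ₁ ^ (n-1))⁻¹ * ((r ^ (-((n:ℝ) - 2)) - δ₀ ^ (-((n:ℝ) - 2))) / ((n:ℝ) - 2))
              = (κ₁ ^ (n-1))⁻¹ / ((n:ℝ) - 2) * r ^ (-((n:ℝ) - 2))
                - (κ₁ ^ (n-1))⁻¹ / ((n:ℝ) - 2) * δ₀ ^ (-((n:ℝ) - 2)) := by ring
          have h10 : 0 < (κ₁ ^ (n-1))⁻¹ / ((n:ℝ) - 2) := by positivity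
          calc (∫ s in Ioc r δ₀, G s)
              ≤ (κ₁ ^ (n-1))⁻¹ * ((δ₀ ^ (-((n:ℝ) - 2)) - r ^ (-((n:ℝ) - 2))) / (-((n:ℝ) - 2))) :=
                hmono.trans (le_of_eq hval)
            _ = (κ₁ ^ (n-1))⁻¹ * ((r ^ (-((n:ℝ) - 2)) - δ₀ ^ (-((n:ℝ) - 2))) / ((n:ℝ) - 2)) := by
                rw [hfr]
            _ ≤ (κ₁ ^ (n-1))⁻¹ / ((n:ℝ) - 2) * r ^ (-((n:ℝ) - 2)) := by
                rw [h9]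
                linarith [mul_pos h10 hδX]
    -- assemble the small-regime bound
    have hn0 : (0:ℝ) < (n:ℝ) := by positivity
    set D : ℝ := κ₂ ^ (n - 1) / (n:ℝ) with hDdef2
    have hD0 : 0 ≤ D := by positivity
    set q1 : ℝ := (n:ℝ)/p - e/2 with hq1def
    set q2 : ℝ := (n:ℝ)/p with hq2def
    have hq10 : 0 ≤ q1 := by rw [hq1def]; linarith [heB]
    have hq20 : 0 ≤ q2 := by positivity
    refine ⟨D ^ (1/p) * (A ^ (1/2:ℝ) * δ₀ ^ q1 + (J δ₀) ^ (1/2:ℝ) * δ₀ ^ q2), by positivity, ?_⟩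
    intro r hr hrδ₀
    have hIb : I r ≤ D * r ^ ((n:ℝ)) := by
      have h1 : I r = ∫ s in Ioc 0 r, F s := by
        show (∫ s in (0:ℝ)..r, F s) = _
        rw [intervalIntegral.integral_of_le hr.le]
      have h2 : (∫ s in Ioc 0 r, F s) ≤ ∫ s in Ioc 0 r, κ₂ ^ (n-1) * s ^ (n-1) := by
        refine setIntegral_mono_on (hIF r hr)
          ((continuous_const.mul (continuous_pow _)).integrableOn_Ioc) measurableSet_Ioc ?_
        intro s hs
        have hs0 : 0 < s := hs.1
        have hsδ : s < δ := lt_of_le_of_lt (le_trans hs.2 hrδ₀) hδ₀δ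
        show F s ≤ _
        rw [hFdef, ← mul_pow]
        exact pow_le_pow_left₀ (hpos s hs0).le (h0 s ⟨hs0, hsδ⟩).2 _
      have h3 : (∫ s in Ioc 0 r, κ₂ ^ (n-1) * s ^ (n-1)) = D * r ^ ((n:ℝ)) := by
        rw [← intervalIntegral.integral_of_le hr.le, intervalIntegral.integral_const_mul,
          integral_pow, show (n-1)+1 = n from by omega, hmc,
          zero_pow (by omega : n ≠ 0), hDdef2, ← Real.rpow_natCast r n]
        ring
      rw [h1]
      exact h2.trans (le_of_eq h3)
    have hJb : J r ≤ A * r ^ (-e) + J δ₀ := by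
      rw [hJsplit r δ₀ hr hrδ₀]
      exact add_le_add (hbound r hr hrδ₀) le_rfl
    have hA0' : 0 ≤ A * r ^ (-e) := mul_nonneg hA0 (Real.rpow_nonneg hr.le _)
    calc I r ^ (1/p) * J r ^ (1/2:ℝ)
        ≤ (D * r ^ ((n:ℝ))) ^ (1/p) * (A * r ^ (-e) + J δ₀) ^ (1/2:ℝ) :=
          mul_le_mul (Real.rpow_le_rpow (hI0 r hr) hIb (by positivity))
            (Real.rpow_le_rpow (hJ0 r hr) hJb (by norm_num))
            (Real.rpow_nonneg (hJ0 r hr) _)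
            (Real.rpow_nonneg (mul_nonneg hD0 (Real.rpow_nonneg hr.le _)) _)
      _ ≤ (D * r ^ ((n:ℝ))) ^ (1/p) * ((A * r ^ (-e)) ^ (1/2:ℝ) + (J δ₀) ^ (1/2:ℝ)) := by
          refine mul_le_mul_of_nonneg_left ?_
            (Real.rpow_nonneg (mul_nonneg hD0 (Real.rpow_nonneg hr.le _)) _)
          exact rpow_half_add_le _ _ hA0' hJδ
      _ = D ^ (1/p) * (A ^ (1/2:ℝ) * r ^ q1 + (J δ₀) ^ (1/2:ℝ) * r ^ q2) := by
          rw [Real.mul_rpow hD0 (Real.rpow_nonneg hr.le _),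
            Real.mul_rpow hA0 (Real.rpow_nonneg hr.le _),
            ← Real.rpow_mul hr.le, ← Real.rpow_mul hr.le,
            show (n:ℝ) * (1/p) = q2 from by rw [hq2def]; ring,
            show -e * (1/2:ℝ) = -(e/2) from by ring,
            show q1 = q2 + -(e/2) from by rw [hq1def, hq2def]; ring,
            Real.rpow_add hr]
          ring
      _ ≤ D ^ (1/p) * (A ^ (1/2:ℝ) * δ₀ ^ q1 + (J δ₀) ^ (1/2:ℝ) * δ₀ ^ q2) := by
          refine mul_le_mul_of_nonneg_left (add_le_add ?_ ?_) (Real.rpow_nonneg hD0 _)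
          · exact mul_le_mul_of_nonneg_left (Real.rpow_le_rpow hr.le hrδ₀ hq10)
              (Real.rpow_nonneg hA0 _)
          · exact mul_le_mul_of_nonneg_left (Real.rpow_le_rpow hr.le hrδ₀ hq20)
              (Real.rpow_nonneg hJδ _)
  refine ⟨max Cs (max (I R₁ ^ (1/p) * J δ₀ ^ (1/2:ℝ)) Cl), ?_⟩
  intro r hr
  show I r ^ (1/p) * J r ^ (1/2:ℝ) ≤ _
  rcases le_total r δ₀ with h | h
  · exact le_trans (hsmall r hr h) (le_max_left _ _)
  · rcases le_total r R₁ with h' | h'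
    · exact le_trans (hmid r h h') (le_trans (le_max_left _ _) (le_max_right _ _))
    · exact le_trans (hlarge r h') (le_trans (le_max_right _ _) (le_max_right _ _))
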